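/- Assume κ ≠ 0, let ν be real, and let m, n ≥ 0 be integers such that 2ν/κ + m − n + 1 + j ≠ 0 for all integers 0 ≤ j ≤ n−1. Define P_{m,n}^{ν;κ}(z) = (1+κ|z|²)^{ν/κ + m} · (∇_{ν+κ} ∘ ∇_{ν+2κ} ∘ ⋯ ∘ ∇_{ν+mκ})[w ↦ (1+κ|w|²)^{−(ν/κ+m)} w^n](z) on Ω = {z : 1+κ|z|² > 0} (the composition being the identity when m = 0). Then for every z ∈ Ω, P_{m,n}^{ν;κ}(z) = C · (1+κ|z|²)^{2(ν/κ+m)+1} · (∂^{m+n}/∂z^m∂z̄^n)[w ↦ (1+κ|w|²)^{−2(ν/κ+m)+m+n−1}](z), where C = (−1)^{m+n} / (κ^n · (2ν/κ + m − n + 1)_n) and (a)_n = a(a+1)⋯(a+n−1) is the Pochhammer symbol. -/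

import Mathlib

open Complex MeasureTheory Filter

/-- Wirtinger derivative ∂f/∂z = (1/2)(∂f/∂x − i ∂f/∂y). -/
noncomputable def wderiv (f : ℂ → ℂ) (z : ℂ) : ℂ :=
  (fderiv ℝ f z 1 - Complex.I * fderiv ℝ f z Complex.I) / 2

/-- Anti-holomorphic Wirtinger derivative ∂f/∂z̄ = (1/2)(∂f/∂x + i ∂f/∂y). -/
noncomputable def wderivBar (f : ℂ → ℂ) (z : ℂ) : ℂ :=
  (fderiv ℝ f z 1 + Complex.I * fderiv ℝ f z Complex.I) / 2

/-- Twisted Laplacian L_κ^ν. -/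
noncomputable def twistedLap (κ ν : ℝ) (f : ℂ → ℂ) (z : ℂ) : ℂ :=
  -(((1 + κ * Complex.normSq z : ℝ) : ℂ) ^ 2 * wderiv (wderivBar f) z
    + (ν : ℂ) * ((1 + κ * Complex.normSq z : ℝ) : ℂ) *
        (z * wderiv f z - (starRingEnd ℂ) z * wderivBar f z)
    - (ν : ℂ) ^ 2 * ((Complex.normSq z : ℝ) : ℂ) * f z)

/-- (∇_α f)(z) = −(1+κ|z|²) ∂f/∂z + α z̄ f(z). -/
noncomputable def nabla (κ α : ℝ) (f : ℂ → ℂ) (z : ℂ) : ℂ :=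
  -((1 + κ * Complex.normSq z : ℝ) : ℂ) * wderiv f z + (α : ℂ) * (starRingEnd ℂ) z * f z

/-- (∇*_α f)(z) = (1+κ|z|²) ∂f/∂z̄ + (α−κ) z f(z). -/
noncomputable def nablaStar (κ α : ℝ) (f : ℂ → ℂ) (z : ℂ) : ℂ :=
  ((1 + κ * Complex.normSq z : ℝ) : ℂ) * wderivBar f z + ((α - κ : ℝ) : ℂ) * z * f z

/-- ∇_{ν+κ} ∘ ∇_{ν+2κ} ∘ ⋯ ∘ ∇_{ν+mκ} (the identity when m = 0). -/
noncomputable def nablaChain (κ : ℝ) : ℕ → ℝ → (ℂ → ℂ) → (ℂ → ℂ)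
  | 0, _, f => f
  | m + 1, ν, f => nabla κ (ν + κ) (nablaChain κ m (ν + κ) f)

/-- (D g)(z) = (1+κ|z|²)² ∂g/∂z. -/
noncomputable def Dop (κ : ℝ) (g : ℂ → ℂ) (z : ℂ) : ℂ :=
  ((1 + κ * Complex.normSq z : ℝ) : ℂ) ^ 2 * wderiv g z

/-- Generalized binomial coefficient C(r,k) for real r. -/
noncomputable def genBinom (r : ℝ) (k : ℕ) : ℝ :=
  (∏ i ∈ Finset.range k, (r - i)) / (Nat.factorial k)

/-- Jacobi polynomial P_j^{(a,b)}(x) with real parameters a, b. -/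
noncomputable def jacobiP (a b : ℝ) (j : ℕ) (x : ℝ) : ℝ :=
  ∑ s ∈ Finset.range (j + 1),
    genBinom ((j : ℝ) + a) (j - s) * genBinom ((j : ℝ) + b) s *
      ((x - 1) / 2) ^ s * ((x + 1) / 2) ^ (j - s)

/-- Pochhammer symbol (a)_n = a(a+1)⋯(a+n−1). -/
noncomputable def risingFactorial (a : ℝ) (n : ℕ) : ℝ :=
  ∏ i ∈ Finset.range n, (a + i)

/-! ## Toolkit -/

theorem wderiv_holo {f : ℂ → ℂ} {f' z : ℂ} (h : HasDerivAt f f' z) : wderiv f z = f' := by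
  have hf : fderiv ℝ f z = ContinuousLinearMap.restrictScalars ℝ
      ((ContinuousLinearMap.smulRight (1 : ℂ →L[ℂ] ℂ) f')) :=
    (h.hasFDerivAt.restrictScalars ℝ).fderiv
  simp only [wderiv, hf, ContinuousLinearMap.coe_restrictScalars',
    ContinuousLinearMap.smulRight_apply, ContinuousLinearMap.one_apply, smul_eq_mul]
  ring_nf
  rw [Complex.I_sq]
  ring

theorem wderivBar_holo {f : ℂ → ℂ} {f' z : ℂ} (h : HasDerivAt f f' z) : wderivBar f z = 0 := by
  have hf : fderiv ℝ f z = ContinuousLinearMap.restrictScalars ℝ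
      ((ContinuousLinearMap.smulRight (1 : ℂ →L[ℂ] ℂ) f')) :=
    (h.hasFDerivAt.restrictScalars ℝ).fderiv
  simp only [wderivBar, hf, ContinuousLinearMap.coe_restrictScalars',
    ContinuousLinearMap.smulRight_apply, ContinuousLinearMap.one_apply, smul_eq_mul]
  ring_nf
  rw [Complex.I_sq]
  ring

theorem antiholo_fderiv {g : ℂ → ℂ} {g' z : ℂ} (h : HasDerivAt g g' z) :
    fderiv ℝ (fun w => (starRingEnd ℂ) (g w)) z =
      Complex.conjCLE.toContinuousLinearMap.comp (ContinuousLinearMap.restrictScalars ℝ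
      ((ContinuousLinearMap.smulRight (1 : ℂ →L[ℂ] ℂ) g'))) := by
  have hc : HasFDerivAt (fun w => (starRingEnd ℂ) (g w))
      (Complex.conjCLE.toContinuousLinearMap.comp (ContinuousLinearMap.restrictScalars ℝ
      ((ContinuousLinearMap.smulRight (1 : ℂ →L[ℂ] ℂ) g')))) z :=
    (Complex.conjCLE.hasFDerivAt).comp z (h.hasFDerivAt.restrictScalars ℝ)
  exact hc.fderiv

theorem wderiv_antiholo {g : ℂ → ℂ} {g' z : ℂ} (h : HasDerivAt g g' z) :
    wderiv (fun w => (starRingEnd ℂ) (g w)) z = 0 := by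
  simp only [wderiv, antiholo_fderiv h, ContinuousLinearMap.coe_comp', Function.comp_apply,
    ContinuousLinearMap.coe_restrictScalars', ContinuousLinearMap.smulRight_apply,
    ContinuousLinearMap.one_apply, smul_eq_mul, ContinuousLinearEquiv.coe_coe,
    Complex.conjCLE_apply, map_mul, Complex.conj_I, mul_one, map_one]
  ring_nf
  rw [Complex.I_sq]
  ring

theorem wderivBar_antiholo {g : ℂ → ℂ} {g' z : ℂ} (h : HasDerivAt g g' z) :
    wderivBar (fun w => (starRingEnd ℂ) (g w)) z = (starRingEnd ℂ) g' := by
  simp only [wderivBar, antiholo_fderiv h, ContinuousLinearMap.coe_comp', Function.comp_apply,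
    ContinuousLinearMap.coe_restrictScalars', ContinuousLinearMap.smulRight_apply,
    ContinuousLinearMap.one_apply, smul_eq_mul, ContinuousLinearEquiv.coe_coe,
    Complex.conjCLE_apply, map_mul, Complex.conj_I, mul_one, map_one]
  ring_nf
  rw [Complex.I_sq]
  ring

theorem hasFDerivAt_normSq (z : ℂ) :
    HasFDerivAt Complex.normSq
      ((2*z.re) • Complex.reCLM + (2*z.im) • Complex.imCLM) z := by
  have h1 : HasFDerivAt (fun w : ℂ => w.re * w.re + w.im * w.im)
      ((z.re • Complex.reCLM + z.re • Complex.reCLM) + (z.im • Complex.imCLM + z.im • Complex.imCLM)) z := by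
    have hre : HasFDerivAt (fun w : ℂ => w.re) Complex.reCLM z := Complex.reCLM.hasFDerivAt
    have him : HasFDerivAt (fun w : ℂ => w.im) Complex.imCLM z := Complex.imCLM.hasFDerivAt
    exact (hre.mul hre).add (him.mul him)
  have : Complex.normSq = fun w : ℂ => w.re * w.re + w.im * w.im := by
    funext w; simp [Complex.normSq_apply]
  rw [this]
  convert h1 using 1
  ext v <;> simp <;> ring

theorem hasFDerivAt_upow (κ c : ℝ) (z : ℂ) (hz : 0 < 1 + κ * Complex.normSq z) :
    HasFDerivAt (fun w : ℂ => (((1 + κ * Complex.normSq w) ^ c : ℝ) : ℂ))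
      (Complex.ofRealCLM.comp ((c * (1 + κ * Complex.normSq z) ^ (c - 1)) •
        (κ • ((2*z.re) • Complex.reCLM + (2*z.im) • Complex.imCLM)))) z := by
  have hu : HasFDerivAt (fun w : ℂ => 1 + κ * Complex.normSq w)
      (κ • ((2*z.re) • Complex.reCLM + (2*z.im) • Complex.imCLM)) z := by
    have := (hasFDerivAt_normSq z).const_mul κ
    exact this.const_add 1
  have hr : HasDerivAt (fun x : ℝ => x ^ c) (c * (1 + κ * Complex.normSq z) ^ (c - 1))
      (1 + κ * Complex.normSq z) := Real.hasDerivAt_rpow_const (Or.inl (ne_of_gt hz))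
  have h2 := hr.comp_hasFDerivAt z hu
  exact Complex.ofRealCLM.hasFDerivAt.comp z h2

theorem diff_upow (κ c : ℝ) (z : ℂ) (hz : 0 < 1 + κ * Complex.normSq z) :
    DifferentiableAt ℝ (fun w : ℂ => (((1 + κ * Complex.normSq w) ^ c : ℝ) : ℂ)) z :=
  (hasFDerivAt_upow κ c z hz).differentiableAt

theorem wderiv_upow (κ c : ℝ) (z : ℂ) (hz : 0 < 1 + κ * Complex.normSq z) :
    wderiv (fun w : ℂ => (((1 + κ * Complex.normSq w) ^ c : ℝ) : ℂ)) z
      = (κ : ℂ) * c * (starRingEnd ℂ) z * (((1 + κ * Complex.normSq z) ^ (c - 1) : ℝ) : ℂ) := by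
  have h := (hasFDerivAt_upow κ c z hz).fderiv
  simp only [wderiv, h, ContinuousLinearMap.coe_comp', Function.comp_apply,
    ContinuousLinearMap.coe_smul', Pi.smul_apply, ContinuousLinearMap.add_apply,
    Complex.reCLM_apply, Complex.imCLM_apply, smul_eq_mul, Complex.I_re, Complex.I_im,
    Complex.one_re, Complex.one_im, Complex.ofRealCLM_apply]
  rw [Complex.ext_iff]
  constructor <;> simp [Complex.conj_re, Complex.conj_im, Complex.div_re, Complex.div_im,
    Complex.normSq_apply] <;> ring

theorem wderivBar_upow (κ c : ℝ) (z : ℂ) (hz : 0 < 1 + κ * Complex.normSq z) :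
    wderivBar (fun w : ℂ => (((1 + κ * Complex.normSq w) ^ c : ℝ) : ℂ)) z
      = (κ : ℂ) * c * z * (((1 + κ * Complex.normSq z) ^ (c - 1) : ℝ) : ℂ) := by
  have h := (hasFDerivAt_upow κ c z hz).fderiv
  simp only [wderivBar, h, ContinuousLinearMap.coe_comp', Function.comp_apply,
    ContinuousLinearMap.coe_smul', Pi.smul_apply, ContinuousLinearMap.add_apply,
    Complex.reCLM_apply, Complex.imCLM_apply, smul_eq_mul, Complex.I_re, Complex.I_im,
    Complex.one_re, Complex.one_im, Complex.ofRealCLM_apply]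
  rw [Complex.ext_iff]
  constructor <;> simp [Complex.div_re, Complex.div_im, Complex.normSq_apply] <;> ring

theorem wderiv_mul {f g : ℂ → ℂ} {z : ℂ} (hf : DifferentiableAt ℝ f z)
    (hg : DifferentiableAt ℝ g z) :
    wderiv (fun w => f w * g w) z = wderiv f z * g z + f z * wderiv g z := by
  simp only [wderiv, fderiv_fun_mul hf hg, ContinuousLinearMap.add_apply,
    ContinuousLinearMap.coe_smul', Pi.smul_apply, smul_eq_mul]
  ring

theorem wderivBar_mul {f g : ℂ → ℂ} {z : ℂ} (hf : DifferentiableAt ℝ f z)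
    (hg : DifferentiableAt ℝ g z) :
    wderivBar (fun w => f w * g w) z = wderivBar f z * g z + f z * wderivBar g z := by
  simp only [wderivBar, fderiv_fun_mul hf hg, ContinuousLinearMap.add_apply,
    ContinuousLinearMap.coe_smul', Pi.smul_apply, smul_eq_mul]
  ring

theorem wderiv_congr {f g : ℂ → ℂ} {z : ℂ} (h : f =ᶠ[nhds z] g) : wderiv f z = wderiv g z := by
  rw [wderiv, wderiv, h.fderiv_eq]

theorem wderivBar_congr {f g : ℂ → ℂ} {z : ℂ} (h : f =ᶠ[nhds z] g) :
    wderivBar f z = wderivBar g z := by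
  rw [wderivBar, wderivBar, h.fderiv_eq]

theorem wderiv_sum {ι : Type*} {s : Finset ι} {F : ι → ℂ → ℂ} {z : ℂ}
    (h : ∀ i ∈ s, DifferentiableAt ℝ (F i) z) :
    wderiv (fun w => ∑ i ∈ s, F i w) z = ∑ i ∈ s, wderiv (F i) z := by
  simp only [wderiv, fderiv_fun_sum h, ContinuousLinearMap.coe_sum', Finset.sum_apply]
  rw [Finset.mul_sum, ← Finset.sum_sub_distrib, Finset.sum_div]

theorem isOpen_Uset (κ : ℝ) : IsOpen {z : ℂ | 0 < 1 + κ * Complex.normSq z} := by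
  apply isOpen_lt continuous_const
  exact (continuous_const.add (continuous_const.mul
    (Complex.continuous_normSq.comp continuous_id)))

theorem diff_pow (j : ℕ) (z : ℂ) : DifferentiableAt ℝ (fun w : ℂ => w ^ j) z :=
  ((differentiable_pow j).differentiableAt (𝕜 := ℂ)).restrictScalars ℝ

theorem diff_conj_pow (k : ℕ) (z : ℂ) :
    DifferentiableAt ℝ (fun w : ℂ => ((starRingEnd ℂ) w) ^ k) z := by
  have : (fun w : ℂ => ((starRingEnd ℂ) w) ^ k) = fun w : ℂ => (starRingEnd ℂ) (w ^ k) := by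
    funext w; rw [map_pow]
  rw [this]
  exact Complex.conjCLE.differentiable.differentiableAt.comp z
    (((differentiable_pow k).differentiableAt (𝕜 := ℂ)).restrictScalars ℝ)

theorem wderiv_pow' (j : ℕ) (z : ℂ) :
    wderiv (fun w : ℂ => w ^ j) z = (j : ℂ) * z ^ (j - 1) :=
  wderiv_holo (hasDerivAt_pow j z)

theorem wderivBar_pow' (j : ℕ) (z : ℂ) : wderivBar (fun w : ℂ => w ^ j) z = 0 :=
  wderivBar_holo (hasDerivAt_pow j z)

theorem wderiv_conj_pow (k : ℕ) (z : ℂ) :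
    wderiv (fun w : ℂ => ((starRingEnd ℂ) w) ^ k) z = 0 := by
  have : (fun w : ℂ => ((starRingEnd ℂ) w) ^ k) = fun w : ℂ => (starRingEnd ℂ) (w ^ k) := by
    funext w; rw [map_pow]
  rw [this]
  exact wderiv_antiholo (hasDerivAt_pow k z)

theorem wderivBar_conj_pow (k : ℕ) (z : ℂ) :
    wderivBar (fun w : ℂ => ((starRingEnd ℂ) w) ^ k) z
      = (k : ℂ) * ((starRingEnd ℂ) z) ^ (k - 1) := by
  have : (fun w : ℂ => ((starRingEnd ℂ) w) ^ k) = fun w : ℂ => (starRingEnd ℂ) (w ^ k) := by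
    funext w; rw [map_pow]
  rw [this, wderivBar_antiholo (hasDerivAt_pow k z)]
  rw [map_mul, map_pow]
  simp

theorem wderiv_const (c : ℂ) (z : ℂ) : wderiv (fun _ => c) z = 0 :=
  wderiv_holo (hasDerivAt_const z c)

theorem wderivBar_const (c : ℂ) (z : ℂ) : wderivBar (fun _ => c) z = 0 :=
  wderivBar_holo (hasDerivAt_const z c)

theorem wderiv_const_mul (c : ℂ) {f : ℂ → ℂ} {z : ℂ} (hf : DifferentiableAt ℝ f z) :
    wderiv (fun w => c * f w) z = c * wderiv f z := by
  rw [wderiv_mul (differentiableAt_const c) hf, wderiv_const]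
  ring

theorem wderivBar_const_mul (c : ℂ) {f : ℂ → ℂ} {z : ℂ} (hf : DifferentiableAt ℝ f z) :
    wderivBar (fun w => c * f w) z = c * wderivBar f z := by
  rw [wderivBar_mul (differentiableAt_const c) hf, wderivBar_const]
  ring

theorem diff_mono (κ : ℝ) (a k : ℕ) (c : ℝ) {z : ℂ} (hz : 0 < 1 + κ * Complex.normSq z) :
    DifferentiableAt ℝ
      (fun w => w ^ a * ((starRingEnd ℂ) w) ^ k * (((1 + κ * Complex.normSq w) ^ c : ℝ) : ℂ)) z :=
  ((diff_pow a z).mul (diff_conj_pow k z)).mul (diff_upow κ c z hz)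

theorem wderiv_mono (κ : ℝ) (a k : ℕ) (c : ℝ) {z : ℂ} (hz : 0 < 1 + κ * Complex.normSq z) :
    wderiv
      (fun w => w ^ a * ((starRingEnd ℂ) w) ^ k * (((1 + κ * Complex.normSq w) ^ c : ℝ) : ℂ)) z
      = (a : ℂ) * z ^ (a - 1) * ((starRingEnd ℂ) z) ^ k *
          (((1 + κ * Complex.normSq z) ^ c : ℝ) : ℂ)
        + (κ : ℂ) * (c : ℂ) * z ^ a * ((starRingEnd ℂ) z) ^ (k + 1) *
          (((1 + κ * Complex.normSq z) ^ (c - 1) : ℝ) : ℂ) := by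
  rw [wderiv_mul ((diff_pow a z).fun_mul (diff_conj_pow k z)) (diff_upow κ c z hz),
    wderiv_mul (diff_pow a z) (diff_conj_pow k z), wderiv_pow', wderiv_conj_pow,
    wderiv_upow κ c z hz]
  ring

theorem wderivBar_mono (κ : ℝ) (a k : ℕ) (c : ℝ) {z : ℂ} (hz : 0 < 1 + κ * Complex.normSq z) :
    wderivBar
      (fun w => w ^ a * ((starRingEnd ℂ) w) ^ k * (((1 + κ * Complex.normSq w) ^ c : ℝ) : ℂ)) z
      = (k : ℂ) * z ^ a * ((starRingEnd ℂ) z) ^ (k - 1) *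
          (((1 + κ * Complex.normSq z) ^ c : ℝ) : ℂ)
        + (κ : ℂ) * (c : ℂ) * z ^ (a + 1) * ((starRingEnd ℂ) z) ^ k *
          (((1 + κ * Complex.normSq z) ^ (c - 1) : ℝ) : ℂ) := by
  rw [wderivBar_mul ((diff_pow a z).fun_mul (diff_conj_pow k z)) (diff_upow κ c z hz),
    wderivBar_mul (diff_pow a z) (diff_conj_pow k z), wderivBar_pow', wderivBar_conj_pow,
    wderivBar_upow κ c z hz]
  ring

noncomputable def coef (κ β : ℝ) (n : ℕ) : ℕ → ℕ → ℂ
  | 0, 0 => 1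
  | 0, _ + 1 => 0
  | m + 1, 0 => coef κ β n m 0 * ((n - m : ℕ) : ℂ)
  | m + 1, k + 1 => coef κ β n m (k + 1) * ((n - (m - (k + 1)) : ℕ) : ℂ)
      + coef κ β n m k * (κ : ℂ) * ((β : ℂ) - (k : ℂ))

theorem coef_eq_zero (κ β : ℝ) (n : ℕ) : ∀ m k, m < k → coef κ β n m k = 0 := by
  intro m
  induction m with
  | zero =>
    intro k hk
    match k, hk with
    | k + 1, _ => rfl
  | succ m ih =>
    intro k hk
    match k, hk with
    | k + 1, hk =>
      have h1 : m < k + 1 := by omega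
      have h2 : m < k := by omega
      show coef κ β n m (k + 1) * _ + coef κ β n m k * _ * _ = 0
      rw [ih _ h1, ih _ h2]
      ring

noncomputable def Gfun (κ β : ℝ) (n m : ℕ) (z : ℂ) : ℂ :=
  ∑ k ∈ Finset.range (m + 1),
    coef κ β n m k * (z ^ (n - (m - k)) * ((starRingEnd ℂ) z) ^ k *
      (((1 + κ * Complex.normSq z) ^ (β - k) : ℝ) : ℂ))

theorem diff_G (κ β : ℝ) (n m : ℕ) {z : ℂ} (hz : 0 < 1 + κ * Complex.normSq z) :
    DifferentiableAt ℝ (Gfun κ β n m) z := by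
  have : Gfun κ β n m = fun w => ∑ k ∈ Finset.range (m + 1),
      coef κ β n m k * (w ^ (n - (m - k)) * ((starRingEnd ℂ) w) ^ k *
        (((1 + κ * Complex.normSq w) ^ (β - k) : ℝ) : ℂ)) := rfl
  rw [this]
  apply DifferentiableAt.fun_sum
  intro k _
  exact (differentiableAt_const _).mul (diff_mono κ _ k _ hz)

theorem wderiv_G (κ β : ℝ) (n m : ℕ) {z : ℂ} (hz : 0 < 1 + κ * Complex.normSq z) :
    wderiv (Gfun κ β n m) z = Gfun κ β n (m + 1) z := by
  rw [show Gfun κ β n m = (fun w => ∑ k ∈ Finset.range (m + 1),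
      coef κ β n m k * (w ^ (n - (m - k)) * ((starRingEnd ℂ) w) ^ k *
        (((1 + κ * Complex.normSq w) ^ (β - k) : ℝ) : ℂ))) from rfl]
  rw [wderiv_sum (fun k _ => (differentiableAt_const _).fun_mul (diff_mono κ _ k _ hz))]
  have hterm : ∀ k ∈ Finset.range (m + 1),
      wderiv (fun w => coef κ β n m k * (w ^ (n - (m - k)) * ((starRingEnd ℂ) w) ^ k *
        (((1 + κ * Complex.normSq w) ^ (β - k) : ℝ) : ℂ))) z
      = coef κ β n m k * (((n - (m - k) : ℕ) : ℂ) * z ^ (n - (m - k) - 1) *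
            ((starRingEnd ℂ) z) ^ k * (((1 + κ * Complex.normSq z) ^ (β - k) : ℝ) : ℂ))
        + coef κ β n m k * ((κ : ℂ) * ((β : ℂ) - k) * z ^ (n - (m - k)) *
            ((starRingEnd ℂ) z) ^ (k + 1) *
            (((1 + κ * Complex.normSq z) ^ (β - k - 1) : ℝ) : ℂ)) := by
    intro k _
    rw [wderiv_const_mul _ (diff_mono κ _ k _ hz), wderiv_mono κ _ k _ hz]
    push_cast
    ring
  rw [Finset.sum_congr rfl hterm, Finset.sum_add_distrib]
  rw [Finset.sum_range_succ' (fun x => coef κ β n m x *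
      (((n - (m - x) : ℕ) : ℂ) * z ^ (n - (m - x) - 1) * ((starRingEnd ℂ) z) ^ x *
        (((1 + κ * Complex.normSq z) ^ (β - (x : ℝ)) : ℝ) : ℂ))) m]
  have hext : (∑ x ∈ Finset.range (m + 1), coef κ β n m (x + 1) *
        (((n - (m - (x + 1)) : ℕ) : ℂ) * z ^ (n - (m - (x + 1)) - 1) *
          ((starRingEnd ℂ) z) ^ (x + 1) *
          (((1 + κ * Complex.normSq z) ^ (β - ((x + 1 : ℕ) : ℝ)) : ℝ) : ℂ)))
      = ∑ x ∈ Finset.range m, coef κ β n m (x + 1) *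
        (((n - (m - (x + 1)) : ℕ) : ℂ) * z ^ (n - (m - (x + 1)) - 1) *
          ((starRingEnd ℂ) z) ^ (x + 1) *
          (((1 + κ * Complex.normSq z) ^ (β - ((x + 1 : ℕ) : ℝ)) : ℝ) : ℂ)) := by
    rw [Finset.sum_range_succ, coef_eq_zero κ β n m (m + 1) (by omega)]
    ring
  rw [← hext, add_right_comm, ← Finset.sum_add_distrib]
  have hRHS : Gfun κ β n (m + 1) z
      = (∑ x ∈ Finset.range (m + 1), coef κ β n (m + 1) (x + 1) *
          (z ^ (n - (m + 1 - (x + 1))) * ((starRingEnd ℂ) z) ^ (x + 1) *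
            (((1 + κ * Complex.normSq z) ^ (β - ((x + 1 : ℕ) : ℝ)) : ℝ) : ℂ)))
        + coef κ β n (m + 1) 0 * (z ^ (n - (m + 1 - 0)) * ((starRingEnd ℂ) z) ^ 0 *
            (((1 + κ * Complex.normSq z) ^ (β - ((0 : ℕ) : ℝ)) : ℝ) : ℂ)) := by
    rw [show Gfun κ β n (m + 1) z = ∑ k ∈ Finset.range (m + 1 + 1),
        coef κ β n (m + 1) k * (z ^ (n - (m + 1 - k)) * ((starRingEnd ℂ) z) ^ k *
          (((1 + κ * Complex.normSq z) ^ (β - (k : ℝ)) : ℝ) : ℂ)) from rfl]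
    rw [Finset.sum_range_succ']
  rw [hRHS]
  congr 1
  · apply Finset.sum_congr rfl
    intro x hx
    have hxm : x ≤ m := by simpa using Nat.lt_succ_iff.mp (Finset.mem_range.mp hx)
    have e1 : β - (x : ℝ) - 1 = β - ((x + 1 : ℕ) : ℝ) := by push_cast; ring
    rw [e1, show coef κ β n (m + 1) (x + 1) = coef κ β n m (x + 1) *
        ((n - (m - (x + 1)) : ℕ) : ℂ) + coef κ β n m x * (κ : ℂ) * ((β : ℂ) - (x : ℂ)) from rfl]
    rcases Nat.lt_or_ge x m with hlt | hge
    · have e2 : n - (m - (x + 1)) - 1 = n - (m - x) := by omega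
      have e3 : m + 1 - (x + 1) = m - x := by omega
      rw [e2, e3]
      push_cast
      ring
    · have hxe : x = m := le_antisymm hxm hge
      subst hxe
      rw [coef_eq_zero κ β n x (x + 1) (by omega)]
      have e3 : x + 1 - (x + 1) = x - x := by omega
      rw [e3]
      push_cast
      ring
  · rw [show coef κ β n (m + 1) 0 = coef κ β n m 0 * ((n - m : ℕ) : ℂ) from rfl]
    have e4 : n - (m - 0) - 1 = n - (m + 1 - 0) := by omega
    have e5 : m - 0 = m := by omega
    rw [e4, e5]
    push_cast
    ring

theorem wderiv_iter_congr {U : Set ℂ} (hU : IsOpen U) {f g : ℂ → ℂ}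
    (h : ∀ w ∈ U, f w = g w) (m : ℕ) : ∀ z ∈ U, wderiv^[m] f z = wderiv^[m] g z := by
  induction m with
  | zero => simpa using h
  | succ m ih =>
    intro z hz
    rw [Function.iterate_succ_apply', Function.iterate_succ_apply']
    exact wderiv_congr (eventually_of_mem (hU.mem_nhds hz) ih)

theorem wderivBar_iter_congr {U : Set ℂ} (hU : IsOpen U) {f g : ℂ → ℂ}
    (h : ∀ w ∈ U, f w = g w) (m : ℕ) : ∀ z ∈ U, wderivBar^[m] f z = wderivBar^[m] g z := by
  induction m with
  | zero => simpa using h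
  | succ m ih =>
    intro z hz
    rw [Function.iterate_succ_apply', Function.iterate_succ_apply']
    exact wderivBar_congr (eventually_of_mem (hU.mem_nhds hz) ih)

theorem u_mul (κ : ℝ) {z : ℂ} (hz : 0 < 1 + κ * Complex.normSq z) (a b : ℝ) :
    (((1 + κ * Complex.normSq z) ^ a : ℝ) : ℂ) * (((1 + κ * Complex.normSq z) ^ b : ℝ) : ℂ)
      = (((1 + κ * Complex.normSq z) ^ (a + b) : ℝ) : ℂ) := by
  rw [← Complex.ofReal_mul, ← Real.rpow_add hz]

theorem u_succ (κ : ℝ) {z : ℂ} (hz : 0 < 1 + κ * Complex.normSq z) (a : ℝ) :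
    ((1 + κ * Complex.normSq z : ℝ) : ℂ) * (((1 + κ * Complex.normSq z) ^ a : ℝ) : ℂ)
      = (((1 + κ * Complex.normSq z) ^ (a + 1) : ℝ) : ℂ) := by
  rw [show (a + 1 : ℝ) = 1 + a from by ring, ← u_mul κ hz 1 a, Real.rpow_one]

theorem memU_iff (κ : ℝ) (z : ℂ) :
    z ∈ {w : ℂ | 0 < 1 + κ * Complex.normSq w} ↔ 0 < 1 + κ * Complex.normSq z := Iff.rfl

theorem wderiv_iter_F (κ β : ℝ) (n : ℕ) (m : ℕ) :
    ∀ z, 0 < 1 + κ * Complex.normSq z →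
      wderiv^[m] (fun w => w ^ n * (((1 + κ * Complex.normSq w) ^ β : ℝ) : ℂ)) z
        = Gfun κ β n m z := by
  induction m with
  | zero =>
    intro z hz
    simp only [Function.iterate_zero, id_eq]
    rw [show Gfun κ β n 0 z = coef κ β n 0 0 * (z ^ (n - (0 - 0)) * ((starRingEnd ℂ) z) ^ 0 *
      (((1 + κ * Complex.normSq z) ^ (β - ((0:ℕ) : ℝ)) : ℝ) : ℂ)) from by
        simp [Gfun]]
    show _ = (1 : ℂ) * _
    norm_num
  | succ m ih =>
    intro z hz
    rw [Function.iterate_succ_apply']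
    have hcongr := wderiv_congr (f := wderiv^[m]
        (fun w => w ^ n * (((1 + κ * Complex.normSq w) ^ β : ℝ) : ℂ))) (g := Gfun κ β n m)
      (eventually_of_mem ((isOpen_Uset κ).mem_nhds hz) (fun w hw => ih w hw))
    rw [hcongr, wderiv_G κ β n m hz]

theorem wderiv_iter_constmul (κ c : ℝ) (n : ℕ) (C : ℂ) (m : ℕ) :
    ∀ z, 0 < 1 + κ * Complex.normSq z →
      wderiv^[m] (fun w => C * (w ^ n * (((1 + κ * Complex.normSq w) ^ c : ℝ) : ℂ))) z
        = C * Gfun κ c n m z := by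
  induction m with
  | zero =>
    intro z hz
    simp only [Function.iterate_zero, id_eq]
    rw [show Gfun κ c n 0 z = coef κ c n 0 0 * (z ^ (n - (0 - 0)) * ((starRingEnd ℂ) z) ^ 0 *
      (((1 + κ * Complex.normSq z) ^ (c - ((0:ℕ) : ℝ)) : ℝ) : ℂ)) from by simp [Gfun]]
    show _ = C * ((1 : ℂ) * _)
    norm_num
  | succ m ih =>
    intro z hz
    rw [Function.iterate_succ_apply']
    have hcongr := wderiv_congr
      (g := fun w => C * Gfun κ c n m w)
      (eventually_of_mem ((isOpen_Uset κ).mem_nhds hz) (fun w hw => ih w hw))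
    rw [hcongr, wderiv_const_mul C (diff_G κ c n m hz), wderiv_G κ c n m hz]

theorem wderiv_add {f g : ℂ → ℂ} {z : ℂ} (hf : DifferentiableAt ℝ f z)
    (hg : DifferentiableAt ℝ g z) :
    wderiv (fun w => f w + g w) z = wderiv f z + wderiv g z := by
  simp only [wderiv, fderiv_fun_add hf hg, ContinuousLinearMap.add_apply]
  ring

theorem diff_conj (z : ℂ) : DifferentiableAt ℝ (fun w : ℂ => (starRingEnd ℂ) w) z := by
  have := diff_conj_pow 1 z
  simpa using this

theorem wderiv_conj (z : ℂ) : wderiv (fun w : ℂ => (starRingEnd ℂ) w) z = 0 := by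
  have := wderiv_conj_pow 1 z
  simpa using this

theorem Gfun_zero (κ β : ℝ) (n : ℕ) (z : ℂ) :
    Gfun κ β n 0 z = z ^ n * (((1 + κ * Complex.normSq z) ^ β : ℝ) : ℂ) := by
  simp [Gfun, coef]

theorem barpow (κ γ : ℝ) (j : ℕ) :
    ∀ z : ℂ, 0 < 1 + κ * Complex.normSq z →
      wderivBar^[j] (fun w => (((1 + κ * Complex.normSq w) ^ γ : ℝ) : ℂ)) z
        = ((κ : ℂ) ^ j * ∏ i ∈ Finset.range j, ((γ : ℂ) - (i : ℂ))) *
            (z ^ j * (((1 + κ * Complex.normSq z) ^ (γ - (j : ℝ)) : ℝ) : ℂ)) := by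
  induction j with
  | zero =>
    intro z hz
    norm_num
  | succ j ih =>
    intro z hz
    rw [Function.iterate_succ_apply']
    have hcongr := wderivBar_congr
      (g := fun w => ((κ : ℂ) ^ j * ∏ i ∈ Finset.range j, ((γ : ℂ) - (i : ℂ))) *
            (w ^ j * (((1 + κ * Complex.normSq w) ^ (γ - (j : ℝ)) : ℝ) : ℂ)))
      (eventually_of_mem ((isOpen_Uset κ).mem_nhds hz) (fun w hw => ih w hw))
    rw [hcongr, wderivBar_const_mul _ ((diff_pow j z).fun_mul (diff_upow κ _ z hz)),
      wderivBar_mul (diff_pow j z) (diff_upow κ _ z hz), wderivBar_pow',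
      wderivBar_upow κ _ z hz]
    have e1 : γ - (j : ℝ) - 1 = γ - ((j + 1 : ℕ) : ℝ) := by push_cast; ring
    rw [e1, Finset.prod_range_succ]
    push_cast
    ring

theorem miniLeibniz (κ β : ℝ) (n : ℕ) (j : ℕ) :
    ∀ z : ℂ, 0 < 1 + κ * Complex.normSq z →
      wderiv^[j] (fun w => w ^ n * (((1 + κ * Complex.normSq w) ^ (β + 1) : ℝ) : ℂ)) z
        = ((1 + κ * Complex.normSq z : ℝ) : ℂ) * Gfun κ β n j z
          + (j : ℂ) * (κ : ℂ) * (starRingEnd ℂ) z * Gfun κ β n (j - 1) z := by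
  induction j with
  | zero =>
    intro z hz
    simp only [Function.iterate_zero, id_eq, Gfun_zero, Nat.cast_zero, zero_mul, add_zero,
      Nat.zero_sub]
    rw [← u_succ κ hz β]
    ring
  | succ j ih =>
    intro z hz
    rw [Function.iterate_succ_apply']
    have hcongr := wderiv_congr
      (g := fun w => ((1 + κ * Complex.normSq w : ℝ) : ℂ) * Gfun κ β n j w
          + ((j : ℂ) * (κ : ℂ)) * ((starRingEnd ℂ) w * Gfun κ β n (j - 1) w))
      (eventually_of_mem ((isOpen_Uset κ).mem_nhds hz)
        (fun w hw => (ih w hw).trans (by ring)))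
    rw [hcongr]
    have hone : ∀ w ∈ {w : ℂ | 0 < 1 + κ * Complex.normSq w},
        ((1 + κ * Complex.normSq w : ℝ) : ℂ)
          = (((1 + κ * Complex.normSq w) ^ (1 : ℝ) : ℝ) : ℂ) := by
      intro w _
      rw [Real.rpow_one]
    have hdiff1 : DifferentiableAt ℝ (fun w : ℂ => ((1 + κ * Complex.normSq w : ℝ) : ℂ)) z := by
      refine (diff_upow κ 1 z hz).congr_of_eventuallyEq ?_
      exact eventually_of_mem ((isOpen_Uset κ).mem_nhds hz) (fun w hw => hone w hw)
    rw [wderiv_add (hdiff1.fun_mul (diff_G κ β n j hz))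
      ((differentiableAt_const _).fun_mul ((diff_conj z).fun_mul (diff_G κ β n (j-1) hz))),
      wderiv_mul hdiff1 (diff_G κ β n j hz),
      wderiv_const_mul _ ((diff_conj z).fun_mul (diff_G κ β n (j-1) hz)),
      wderiv_mul (diff_conj z) (diff_G κ β n (j-1) hz), wderiv_conj,
      wderiv_G κ β n j hz, wderiv_G κ β n (j-1) hz]
    have hw1 : wderiv (fun w : ℂ => ((1 + κ * Complex.normSq w : ℝ) : ℂ)) z
        = (κ : ℂ) * (starRingEnd ℂ) z := by
      rw [wderiv_congr (eventually_of_mem ((isOpen_Uset κ).mem_nhds hz) hone),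
        wderiv_upow κ 1 z hz]
      norm_num
    rw [hw1]
    have hj : j - 1 + 1 = j ∨ j = 0 := by omega
    rcases hj with hj | hj
    · rw [hj]
      simp only [Nat.add_sub_cancel]
      push_cast
      ring
    · subst hj
      simp only [Nat.zero_sub, Nat.add_sub_cancel]
      push_cast
      ring

theorem G_shift (κ β : ℝ) (n : ℕ) (j : ℕ) {z : ℂ} (hz : 0 < 1 + κ * Complex.normSq z) :
    Gfun κ (β + 1) n j z
      = ((1 + κ * Complex.normSq z : ℝ) : ℂ) * Gfun κ β n j z
        + (j : ℂ) * (κ : ℂ) * (starRingEnd ℂ) z * Gfun κ β n (j - 1) z := by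
  rw [← wderiv_iter_F κ (β + 1) n j z hz]
  exact miniLeibniz κ β n j z hz

theorem main_ind (κ : ℝ) (hκ : κ ≠ 0) (n : ℕ) :
    ∀ m : ℕ, ∀ ν : ℝ, ∀ z : ℂ, 0 < 1 + κ * Complex.normSq z →
      nablaChain κ m ν
          (fun w => (((1 + κ * Complex.normSq w) ^ (-(ν / κ + m)) : ℝ) : ℂ) * w ^ n) z
      = (-1 : ℂ) ^ m * (((1 + κ * Complex.normSq z) ^ (ν / κ + m + 1) : ℝ) : ℂ) *
          Gfun κ (-2 * (ν / κ + m) + m - 1) n m z := by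
  intro m
  induction m with
  | zero =>
    intro ν z hz
    show (((1 + κ * Complex.normSq z) ^ (-(ν / κ + ((0:ℕ):ℝ))) : ℝ) : ℂ) * z ^ n = _
    rw [Gfun_zero]
    have e : (-(ν / κ + ((0:ℕ):ℝ))) = (ν / κ + ((0:ℕ):ℝ) + 1) +
        (-2 * (ν / κ + ((0:ℕ):ℝ)) + ((0:ℕ):ℝ) - 1) := by push_cast; ring
    rw [e, ← u_mul κ hz]
    ring
  | succ m ih =>
    intro ν z hz
    have et : (ν + κ) / κ + (m : ℝ) = ν / κ + ((m + 1 : ℕ) : ℝ) := by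
      rw [add_div, div_self hκ]; push_cast; ring
    have eβ2 : -2 * (ν / κ + ((m + 1 : ℕ) : ℝ)) + ((m + 1 : ℕ) : ℝ) - 1
        = (-2 * (ν / κ + ((m + 1 : ℕ) : ℝ)) + (m : ℝ) - 1) + 1 := by push_cast; ring
    set B : ℝ := -2 * (ν / κ + ((m + 1 : ℕ) : ℝ)) + (m : ℝ) - 1 with hB
    set t : ℝ := ν / κ + ((m + 1 : ℕ) : ℝ) with ht
    have hinner : ∀ w ∈ {w : ℂ | 0 < 1 + κ * Complex.normSq w},
        nablaChain κ m (ν + κ)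
          (fun w => (((1 + κ * Complex.normSq w) ^ (-(ν / κ + ((m + 1 : ℕ) : ℝ))) : ℝ) : ℂ) * w ^ n) w
        = ((-1 : ℂ) ^ m) * ((((1 + κ * Complex.normSq w) ^ (t + 1) : ℝ) : ℂ) *
            Gfun κ B n m w) := by
      intro w hw
      have h1 := ih (ν + κ) w hw
      have hfun : (fun w => (((1 + κ * Complex.normSq w) ^ (-((ν + κ) / κ + (m : ℝ))) : ℝ) : ℂ) * w ^ n)
          = (fun w => (((1 + κ * Complex.normSq w) ^ (-(ν / κ + ((m + 1 : ℕ) : ℝ))) : ℝ) : ℂ) * w ^ n) := by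
        funext v; rw [et]
      rw [hfun] at h1
      rw [h1, et]
      have eβ : -2 * (ν / κ + ((m + 1 : ℕ) : ℝ)) + (m : ℝ) - 1 = B := rfl
      rw [show (-2 * (ν / κ + ((m + 1 : ℕ) : ℝ)) + (m : ℝ) - 1 : ℝ) = B from rfl]
      ring
    show nabla κ (ν + κ) (nablaChain κ m (ν + κ)
        (fun w => (((1 + κ * Complex.normSq w) ^ (-(ν / κ + ((m + 1 : ℕ) : ℝ))) : ℝ) : ℂ) * w ^ n)) z = _
    rw [show (nabla κ (ν + κ) (nablaChain κ m (ν + κ)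
        (fun w => (((1 + κ * Complex.normSq w) ^ (-(ν / κ + ((m + 1 : ℕ) : ℝ))) : ℝ) : ℂ) * w ^ n)) z)
      = -((1 + κ * Complex.normSq z : ℝ) : ℂ) * wderiv (nablaChain κ m (ν + κ)
          (fun w => (((1 + κ * Complex.normSq w) ^ (-(ν / κ + ((m + 1 : ℕ) : ℝ))) : ℝ) : ℂ) * w ^ n)) z
        + ((ν + κ : ℝ) : ℂ) * (starRingEnd ℂ) z * (nablaChain κ m (ν + κ)
          (fun w => (((1 + κ * Complex.normSq w) ^ (-(ν / κ + ((m + 1 : ℕ) : ℝ))) : ℝ) : ℂ) * w ^ n)) z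
      from rfl]
    rw [wderiv_congr (eventually_of_mem ((isOpen_Uset κ).mem_nhds hz) hinner)]
    rw [hinner z hz]
    rw [wderiv_const_mul _ ((diff_upow κ (t+1) z hz).fun_mul (diff_G κ B n m hz)),
      wderiv_mul (diff_upow κ (t+1) z hz) (diff_G κ B n m hz),
      wderiv_upow κ (t+1) z hz, wderiv_G κ B n m hz]
    rw [eβ2, G_shift κ B n (m+1) hz]
    simp only [Nat.add_sub_cancel]
    have hu : ((1 + κ * Complex.normSq z : ℝ) : ℂ) *
        (((1 + κ * Complex.normSq z) ^ t : ℝ) : ℂ)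
        = (((1 + κ * Complex.normSq z) ^ (t + 1) : ℝ) : ℂ) := u_succ κ hz t
    have e5 : t + 1 - 1 = t := by ring
    rw [e5]
    have hνc : ((ν / κ : ℝ) : ℂ) * (κ : ℂ) = (ν : ℂ) := by
      rw [← Complex.ofReal_mul, div_mul_cancel₀ ν hκ]
    have hT : ((t : ℝ) : ℂ) = ((ν / κ : ℝ) : ℂ) + (((m + 1 : ℕ) : ℝ) : ℂ) := by
      rw [ht, Complex.ofReal_add]
    rw [← hu]
    simp only [Complex.ofReal_add, Complex.ofReal_mul, Complex.ofReal_one,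
      Complex.ofReal_natCast, hT, Nat.cast_add, Nat.cast_one, pow_succ]
    rw [← hνc]
    ring


theorem stmt10 (κ : ℝ) (hκ : κ ≠ 0) (ν : ℝ) (m n : ℕ)
    (hpoch : ∀ j : ℕ, j < n → 2 * ν / κ + (m : ℝ) - (n : ℝ) + 1 + (j : ℝ) ≠ 0)
    (z : ℂ) (hz : 0 < 1 + κ * Complex.normSq z) :
    (((1 + κ * Complex.normSq z) ^ (ν / κ + m) : ℝ) : ℂ) *
        nablaChain κ m ν
          (fun w => (((1 + κ * Complex.normSq w) ^ (-(ν / κ + m)) : ℝ) : ℂ) * w ^ n) z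
      = ((-1 : ℂ) ^ (m + n) /
            ((κ ^ n * risingFactorial (2 * ν / κ + (m : ℝ) - (n : ℝ) + 1) n : ℝ) : ℂ)) *
          (((1 + κ * Complex.normSq z) ^ (2 * (ν / κ + m) + 1) : ℝ) : ℂ) *
          wderiv^[m] (wderivBar^[n]
            (fun w =>
              (((1 + κ * Complex.normSq w) ^ (-(2 * (ν / κ + m)) + m + n - 1) : ℝ) : ℂ))) z := by
  have h1 := main_ind κ hκ n m ν z hz
  rw [h1]
  have hbar : ∀ w ∈ {w : ℂ | 0 < 1 + κ * Complex.normSq w},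
      wderivBar^[n] (fun w =>
        (((1 + κ * Complex.normSq w) ^ (-(2 * (ν / κ + m)) + m + n - 1) : ℝ) : ℂ)) w
      = (fun w => ((κ : ℂ) ^ n * ∏ i ∈ Finset.range n,
            (((-(2 * (ν / κ + m)) + m + n - 1 : ℝ) : ℂ) - (i : ℂ))) *
          (w ^ n * (((1 + κ * Complex.normSq w) ^
            ((-(2 * (ν / κ + m)) + m + n - 1 : ℝ) - (n : ℝ)) : ℝ) : ℂ))) w :=
    fun w hw => barpow κ _ n w hw
  have h2 := wderiv_iter_congr (isOpen_Uset κ) hbar m z hz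
  rw [h2, wderiv_iter_constmul κ _ n _ m z hz]
  have eγB : ((-(2 * (ν / κ + m)) + m + n - 1 : ℝ) - (n : ℝ))
      = -2 * (ν / κ + m) + m - 1 := by ring
  rw [eγB]
  have hprod : (∏ i ∈ Finset.range n,
        (((-(2 * (ν / κ + m)) + m + n - 1 : ℝ) : ℂ) - (i : ℂ)))
      = (-1 : ℂ) ^ n * ((risingFactorial (2 * ν / κ + (m : ℝ) - (n : ℝ) + 1) n : ℝ) : ℂ) := by
    rw [risingFactorial, Complex.ofReal_prod,
      show ((-1 : ℂ)) ^ n = ∏ _i ∈ Finset.range n, (-1 : ℂ) from by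
        rw [Finset.prod_const, Finset.card_range], ← Finset.prod_mul_distrib]
    apply Finset.prod_congr rfl
    intro i _
    push_cast
    ring
  rw [hprod]
  have hRF : risingFactorial (2 * ν / κ + (m : ℝ) - (n : ℝ) + 1) n ≠ 0 := by
    rw [risingFactorial]
    apply Finset.prod_ne_zero_iff.mpr
    intro i hi
    have := hpoch i (Finset.mem_range.mp hi)
    intro hcon
    apply this
    linarith [hcon]
  have hκc : (κ : ℂ) ≠ 0 := Complex.ofReal_ne_zero.mpr hκ
  have hRFc : ((risingFactorial (2 * ν / κ + (m : ℝ) - (n : ℝ) + 1) n : ℝ) : ℂ) ≠ 0 :=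
    Complex.ofReal_ne_zero.mpr hRF
  have hmul := u_mul κ hz (ν / κ + m) (ν / κ + m + 1)
  have emul : (ν / κ + (m : ℝ)) + (ν / κ + m + 1) = 2 * (ν / κ + m) + 1 := by ring
  rw [emul] at hmul
  have hsq : ((-1 : ℂ)) ^ n * ((-1 : ℂ)) ^ n = 1 := by
    rw [← pow_add, ← two_mul, pow_mul]
    norm_num
  rw [pow_add, ← hmul, Complex.ofReal_mul, Complex.ofReal_pow, div_mul_eq_mul_div, div_mul_eq_mul_div,
    eq_div_iff (mul_ne_zero (pow_ne_zero n hκc) hRFc)]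
  linear_combination (-((-1 : ℂ)) ^ m) * (((1 + κ * Complex.normSq z) ^ (ν / κ + (m:ℝ)) : ℝ) : ℂ) *
    (((1 + κ * Complex.normSq z) ^ (ν / κ + (m:ℝ) + 1) : ℝ) : ℂ) *
    Gfun κ (-2 * (ν / κ + (m:ℝ)) + (m:ℝ) - 1) n m z * (κ:ℂ) ^ n *
    ((risingFactorial (2 * ν / κ + (m : ℝ) - (n : ℝ) + 1) n : ℝ) : ℂ) * hsq
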